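/- Let n ∈ ℕ, let B, C, X, Z be n×n complex matrices, and let 𝒞₁ = fromBlocks 0 1 (−C) (−B) be the companion matrix. Let ℳ₁ = {(h, X·h) : h ∈ ℂⁿ} and ℳ₂ = {(h, Z·h) : h ∈ ℂⁿ} be the corresponding subspaces of ℂ^{2n}. Then X and Z form a complete pair of right solvents of the pencil (i.e. X² + B·X + C = 0, Z² + B·Z + C = 0, and X − Z is invertible) if and only if ℳ₁ and ℳ₂ are both invariant under 𝒞₁ and ℂ^{2n} is the (internal) direct sum ℳ₁ ⊕ ℳ₂, i.e. ℳ₁ ∩ ℳ₂ = {0} and ℳ₁ + ℳ₂ = ℂ^{2n}. -/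
import Mathlib

open Matrix

/-- Invariance of the graph subspace of `X` under the companion matrix is equivalent
to `X` being a right solvent. -/
lemma invariant_iff_solvent (n : ℕ) (B C X : Matrix (Fin n) (Fin n) ℂ) :
    (∀ v ∈ {v : Fin n ⊕ Fin n → ℂ | ∃ h : Fin n → ℂ, v = Sum.elim h (X.mulVec h)},
      (Matrix.fromBlocks 0 1 (-C) (-B)).mulVec v ∈
        {v : Fin n ⊕ Fin n → ℂ | ∃ h : Fin n → ℂ, v = Sum.elim h (X.mulVec h)}) ↔
    X ^ 2 + B * X + C = 0 := by
  constructor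
  · intro hinv
    ext i j
    obtain ⟨k, hk⟩ := hinv (Sum.elim (Pi.single j 1) (X.mulVec (Pi.single j 1)))
      ⟨Pi.single j 1, rfl⟩
    rw [fromBlocks_mulVec] at hk
    have hinl := fun i => congrFun hk (Sum.inl i)
    have hinr := congrFun hk (Sum.inr i)
    simp only [Sum.elim_inl, Sum.elim_inr, Sum.elim_comp_inl, Sum.elim_comp_inr,
      Matrix.zero_mulVec, Matrix.one_mulVec, zero_add, Matrix.neg_mulVec,
      Pi.add_apply, Pi.neg_apply] at hinl hinr
    have hkX : k = X.mulVec (Pi.single j 1) := funext fun i => (hinl i).symm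
    rw [hkX] at hinr
    have : (X ^ 2 + B * X + C).mulVec (Pi.single j 1) i = 0 := by
      simp only [Matrix.add_mulVec, pow_two, ← Matrix.mulVec_mulVec, Pi.add_apply]
      linear_combination -hinr
    simpa [Matrix.mulVec_single] using this
  · intro hX v hv
    obtain ⟨h, rfl⟩ := hv
    refine ⟨X.mulVec h, ?_⟩
    rw [fromBlocks_mulVec]
    ext (i | i)
    · simp
    · have h0 : (X ^ 2 + B * X + C).mulVec h = 0 := by rw [hX, Matrix.zero_mulVec]
      have := congrFun h0 i
      simp only [Matrix.add_mulVec, pow_two, ← Matrix.mulVec_mulVec, Pi.add_apply,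
        Pi.zero_apply] at this
      simp only [Sum.elim_inr, Sum.elim_comp_inl, Sum.elim_comp_inr, Matrix.neg_mulVec,
        Pi.add_apply, Pi.neg_apply]
      linear_combination -this

theorem complete_pair_iff_direct_sum (n : ℕ) (B C X Z : Matrix (Fin n) (Fin n) ℂ)
    (M₁ M₂ : Set (Fin n ⊕ Fin n → ℂ))
    (hM₁ : M₁ = {v : Fin n ⊕ Fin n → ℂ | ∃ h : Fin n → ℂ, v = Sum.elim h (X.mulVec h)})
    (hM₂ : M₂ = {v : Fin n ⊕ Fin n → ℂ | ∃ h : Fin n → ℂ, v = Sum.elim h (Z.mulVec h)}) :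
    (X ^ 2 + B * X + C = 0 ∧ Z ^ 2 + B * Z + C = 0 ∧ IsUnit (X - Z)) ↔
      ((∀ v ∈ M₁, (Matrix.fromBlocks 0 1 (-C) (-B)).mulVec v ∈ M₁) ∧
        (∀ v ∈ M₂, (Matrix.fromBlocks 0 1 (-C) (-B)).mulVec v ∈ M₂) ∧
        (∀ v, v ∈ M₁ → v ∈ M₂ → v = 0) ∧
        (∀ v : Fin n ⊕ Fin n → ℂ, ∃ v₁ ∈ M₁, ∃ v₂ ∈ M₂, v = v₁ + v₂)) := by
  subst hM₁ hM₂
  constructor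
  · rintro ⟨hX, hZ, hU⟩
    refine ⟨(invariant_iff_solvent n B C X).2 hX, (invariant_iff_solvent n B C Z).2 hZ, ?_, ?_⟩
    · rintro v ⟨h, rfl⟩ ⟨k, hk⟩
      have hhk : h = k := funext fun i => congrFun hk (Sum.inl i)
      subst hhk
      have h2 : (X - Z).mulVec h = 0 := by
        rw [Matrix.sub_mulVec, sub_eq_zero]
        ext i
        exact congrFun hk (Sum.inr i)
      have h0 : h = 0 := by
        have hinj := Matrix.mulVec_injective_iff_isUnit.2 hU
        have := hinj (a₁ := h) (a₂ := 0) (by simpa using h2)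
        exact this
      subst h0
      ext (i | i) <;> simp
    · intro v
      set a := v ∘ Sum.inl with ha
      set b := v ∘ Sum.inr with hb
      set h := (X - Z)⁻¹.mulVec (b - Z.mulVec a) with hh
      have key : (X - Z).mulVec h = b - Z.mulVec a := by
        rw [hh, Matrix.mulVec_mulVec, Matrix.mul_nonsing_inv _
          ((Matrix.isUnit_iff_isUnit_det _).1 hU), Matrix.one_mulVec]
      refine ⟨Sum.elim h (X.mulVec h), ⟨h, rfl⟩,
        Sum.elim (a - h) (Z.mulVec (a - h)), ⟨a - h, rfl⟩, ?_⟩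
      ext (i | i)
      · show a i = _
        simp
      · show b i = _
        have := congrFun key i
        simp only [Matrix.sub_mulVec, Pi.sub_apply] at this
        simp only [Pi.add_apply, Sum.elim_inr, Matrix.mulVec_sub, Pi.sub_apply]
        linear_combination -this
  · rintro ⟨h1, h2, hint, hsum⟩
    refine ⟨(invariant_iff_solvent n B C X).1 h1, (invariant_iff_solvent n B C Z).1 h2, ?_⟩
    rw [← Matrix.mulVec_injective_iff_isUnit]
    intro p q hpq
    have h0 : (X - Z).mulVec (p - q) = 0 := by
      rw [Matrix.mulVec_sub, hpq, sub_self]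
    have hXZ : X.mulVec (p - q) = Z.mulVec (p - q) := by
      rwa [Matrix.sub_mulVec, sub_eq_zero] at h0
    have := hint (Sum.elim (p - q) (X.mulVec (p - q))) ⟨p - q, rfl⟩
      ⟨p - q, by rw [hXZ]⟩
    have hpq0 : p - q = 0 := funext fun i => congrFun this (Sum.inl i)
    exact sub_eq_zero.1 hpq0
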